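/- Let q = 2^m and X ∈ F_{q^3}, written X = x + yα + zα^q with x, y, z ∈ F_q, where α ∈ F_{q^3} satisfies Tr(α) = 0 and {1, α, α^q} is a basis. Then X^{q²+q+1} = x³ + x(y² + z² + yz)·Tr(α^{q+1}) + Tr((yα + zα^q)³), where Tr = Tr_{F_{q^3}/F_q}. In particular X^{q²+q+1} ∈ F_q. -/

import Mathlib

theorem stmt_6 (m : ℕ) (hm : 0 < m) (q : ℕ) (hq : q = 2 ^ m)
    (F E : Type*) [Field F] [Fintype F] [Field E] [Fintype E] [Algebra F E]
    (hF : Fintype.card F = q) (hE : Fintype.card E = q ^ 3)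
    (Tr : E → E) (hTr : ∀ X, Tr X = X + X ^ q + X ^ q ^ 2)
    (α : E) (hα0 : α ≠ 0) (hαtr : Tr α = 0)
    (hb : ∃ b : Module.Basis (Fin 3) F E, b 0 = 1 ∧ b 1 = α ∧ b 2 = α ^ q) :
    ∀ x y z : F,
      (algebraMap F E x + algebraMap F E y * α + algebraMap F E z * α ^ q) ^ (q ^ 2 + q + 1) =
          (algebraMap F E x) ^ 3 +
            algebraMap F E x * (algebraMap F E (y ^ 2 + z ^ 2 + y * z) * Tr (α ^ (q + 1))) +
            Tr ((algebraMap F E y * α + algebraMap F E z * α ^ q) ^ 3) ∧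
        (algebraMap F E x + algebraMap F E y * α + algebraMap F E z * α ^ q) ^ (q ^ 2 + q + 1) ∈
          Set.range (algebraMap F E) := by
  have hq2 : 1 < q := by
    rw [hq]
    exact Nat.one_lt_two_pow_iff.mpr hm.ne'
  -- characteristic 2
  have hcast : ((q : E)) ^ 3 = 0 := by
    have := FiniteField.cast_card_eq_zero E
    rw [hE] at this
    exact_mod_cast this
  have hr2 : ringChar E = 2 := by
    have hdvd : ringChar E ∣ q ^ 3 := by
      rw [← CharP.cast_eq_zero_iff E (ringChar E)]
      push_cast
      exact hcast
    rcases CharP.char_is_prime_or_zero E (ringChar E) with hp | hp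
    · have h1 : ringChar E ∣ q := hp.dvd_of_dvd_pow hdvd
      rw [hq] at h1
      exact (Nat.prime_dvd_prime_iff_eq hp Nat.prime_two).mp (hp.dvd_of_dvd_pow h1)
    · rw [hp] at hdvd
      refine absurd (zero_dvd_iff.mp hdvd) (pow_ne_zero _ ?_)
      omega
  haveI hC : CharP E 2 := hr2 ▸ ringChar.charP E
  haveI : ExpChar E 2 := ExpChar.prime Nat.prime_two
  have h2 : (2 : E) = 0 := by
    have := CharP.cast_eq_zero E 2
    exact_mod_cast this
  have hadd : ∀ u v : E, (u + v) ^ q = u ^ q + v ^ q := by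
    intro u v
    rw [hq]
    exact add_pow_expChar_pow u v 2 m
  have hfix : ∀ a : F, (algebraMap F E a) ^ q = algebraMap F E a := by
    intro a
    rw [← map_pow, ← hF, FiniteField.pow_card]
  have hE3 : ∀ Y : E, Y ^ q ^ 3 = Y := by
    intro Y
    rw [← hE, FiniteField.pow_card]
  have hqq : ∀ Y : E, Y ^ q ^ 2 = (Y ^ q) ^ q := by
    intro Y
    rw [pow_two, pow_mul]
  have hB : (α ^ q) ^ q = α + α ^ q := by
    have h := hαtr
    rw [hTr] at h
    rw [← pow_mul, ← pow_two]
    linear_combination h - (α + α ^ q) * h2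
  have hAB : (α + α ^ q) ^ q = α := by
    rw [hadd, hB]
    linear_combination (α ^ q) * h2
  have hT1 : Tr (α ^ (q + 1)) = α * α ^ q + α ^ q * (α + α ^ q) + (α + α ^ q) * α := by
    have e1 : α ^ (q + 1) = α * α ^ q := by rw [pow_succ]; ring
    have e2 : (α * α ^ q) ^ q = α ^ q * (α + α ^ q) := by rw [mul_pow, hB]
    rw [hTr, e1, hqq, e2, mul_pow, hAB, hB]
  intro x y z
  set a := algebraMap F E x with ha
  set b := algebraMap F E y with hbb
  set c := algebraMap F E z with hc
  set X := a + b * α + c * α ^ q with hX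
  have hX1 : X ^ q = a + b * α ^ q + c * (α + α ^ q) := by
    rw [hX, hadd, hadd, mul_pow, mul_pow, hfix, hfix, hfix, hB]
  have hX2 : X ^ q ^ 2 = a + b * (α + α ^ q) + c * α := by
    rw [hqq, hX1, hadd, hadd, mul_pow, mul_pow, hfix, hfix, hfix, hB, hAB]
  set W := b * α + c * α ^ q with hW
  have hW1 : W ^ q = b * α ^ q + c * (α + α ^ q) := by
    rw [hW, hadd, mul_pow, mul_pow, hfix, hfix, hB]
  have hW2 : (b * α ^ q + c * (α + α ^ q)) ^ q = b * (α + α ^ q) + c * α := by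
    rw [hadd, mul_pow, mul_pow, hfix, hfix, hB, hAB]
  have hT2 : Tr (W ^ 3) =
      W ^ 3 + (b * α ^ q + c * (α + α ^ q)) ^ 3 + (b * (α + α ^ q) + c * α) ^ 3 := by
    rw [hTr, hqq, pow_right_comm W 3 q, hW1,
      pow_right_comm (b * α ^ q + c * (α + α ^ q)) 3 q, hW2]
  constructor
  · rw [pow_add, pow_add, pow_one, hX2, hX1, map_add, map_add, map_mul, map_pow, map_pow,
      hT1, hT2, hX, hW]
    linear_combination
      (-(c ^ 3 * (α ^ q) ^ 3) - c ^ 3 * α * (α ^ q) ^ 2 - c ^ 3 * α ^ 2 * α ^ q - c ^ 3 * α ^ 3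
        - b * c ^ 2 * (α ^ q) ^ 3 - 3 * (b * c ^ 2 * α * (α ^ q) ^ 2)
        - 2 * (b * c ^ 2 * α ^ 2 * α ^ q) - b * c ^ 2 * α ^ 3
        - b ^ 2 * c * (α ^ q) ^ 3 - 2 * (b ^ 2 * c * α * (α ^ q) ^ 2)
        - 3 * (b ^ 2 * c * α ^ 2 * α ^ q) - b ^ 2 * c * α ^ 3
        - b ^ 3 * (α ^ q) ^ 3 - b ^ 3 * α * (α ^ q) ^ 2 - b ^ 3 * α ^ 2 * α ^ q - b ^ 3 * α ^ 3
        + a * b * c * (α ^ q) ^ 2 + a * b * c * α * α ^ q + a * b * c * α ^ 2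
        + a ^ 2 * c * α ^ q + a ^ 2 * c * α + a ^ 2 * b * α ^ q + a ^ 2 * b * α) * h2
  · -- membership in range
    classical
    have hYq : (X ^ (q ^ 2 + q + 1)) ^ q = X ^ (q ^ 2 + q + 1) := by
      rw [← pow_mul]
      have he : (q ^ 2 + q + 1) * q = q ^ 3 + (q ^ 2 + q) := by ring
      rw [he, pow_add, hE3]
      exact (pow_succ' X (q ^ 2 + q)).symm
    set Y := X ^ (q ^ 2 + q + 1) with hYdef
    have hinj : Function.Injective (algebraMap F E) := (algebraMap F E).injective
    set s : Finset E := Finset.univ.image (algebraMap F E) with hs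
    set t : Finset E := Finset.univ.filter (fun e : E => e ^ q = e) with htdef
    have hst : s ⊆ t := by
      intro e he
      rw [hs, Finset.mem_image] at he
      obtain ⟨a', -, rfl⟩ := he
      rw [htdef, Finset.mem_filter]
      exact ⟨Finset.mem_univ _, hfix a'⟩
    have hscard : s.card = q := by
      rw [hs, Finset.card_image_of_injective _ hinj, Finset.card_univ, hF]
    have htcard : t.card ≤ q := by
      have hsub : t ⊆ (Polynomial.X ^ q - Polynomial.X : Polynomial E).roots.toFinset := by
        intro e he
        rw [htdef, Finset.mem_filter] at he
        rw [Multiset.mem_toFinset, Polynomial.mem_roots']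
        refine ⟨FiniteField.X_pow_card_sub_X_ne_zero E hq2, ?_⟩
        simp [Polynomial.IsRoot, he.2]
      calc t.card ≤ (Polynomial.X ^ q - Polynomial.X : Polynomial E).roots.toFinset.card :=
            Finset.card_le_card hsub
        _ ≤ Multiset.card (Polynomial.X ^ q - Polynomial.X : Polynomial E).roots :=
            Multiset.toFinset_card_le _
        _ ≤ (Polynomial.X ^ q - Polynomial.X : Polynomial E).natDegree :=
            Polynomial.card_roots' _
        _ = q := FiniteField.X_pow_card_sub_X_natDegree_eq E hq2
    have hseq : s = t := Finset.eq_of_subset_of_card_le hst (htcard.trans_eq hscard.symm)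
    have hYt : Y ∈ t := by
      rw [htdef, Finset.mem_filter]
      exact ⟨Finset.mem_univ _, hYq⟩
    rw [← hseq, hs, Finset.mem_image] at hYt
    obtain ⟨a', -, ha'⟩ := hYt
    exact ⟨a', ha'⟩
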